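/- The Laplacian operators of a multicomplex commute with multiplication by p²: L'(p²q) = p²L'(q), L''(p²q) = p²L''(q), and L(p²q) = p²L(q), for q square-free with p²q ∈ M. -/

import Mathlib

open Finsupp

/-- A monomial in variables `x_1 < ⋯ < x_n`, given by its exponent vector. -/
abbrev Mon (n : ℕ) := Fin n → ℕ

/-- Total degree of a monomial. -/
def tdeg {n : ℕ} (m : Mon n) : ℕ := ∑ i, m i

/-- Divisibility of monomials. -/
def mdvd {n : ℕ} (m t : Mon n) : Prop := ∀ i, m i ≤ t i

/-- A multicomplex: a finite set of monomials closed under taking divisors. -/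
def IsMulticomplex {n : ℕ} (M : Finset (Mon n)) : Prop :=
  ∀ m t : Mon n, mdvd m t → t ∈ M → m ∈ M

/-- Square-free monomials. -/
def SqFree {n : ℕ} (m : Mon n) : Prop := ∀ i, m i ≤ 1

def decr {n : ℕ} (m : Mon n) (j : Fin n) : Mon n := Function.update m j (m j - 1)
def incr {n : ℕ} (m : Mon n) (j : Fin n) : Mon n := Function.update m j (m j + 1)
def unitMon {n : ℕ} (i : Fin n) : Mon n := fun j => if j = i then 1 else 0
/-- Sum of the exponents of the variables preceding `j`. -/
def presum {n : ℕ} (m : Mon n) (j : Fin n) : ℕ := ∑ i ∈ Finset.univ.filter (· < j), m i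
/-- Multiplication by the square `p²`. -/
def mulSq {n : ℕ} (p m : Mon n) : Mon n := fun i => 2 * p i + m i

/-- The Björner–Vrećica boundary operator on `ℤ[X]`. -/
noncomputable def bdry (n : ℕ) : (Mon n →₀ ℤ) →ₗ[ℤ] (Mon n →₀ ℤ) :=
  Finsupp.lsum ℤ fun m => LinearMap.toSpanSingleton ℤ _
    (∑ j, (((-1 : ℤ) ^ presum m j) * ((m j % 2 : ℕ) : ℤ)) • Finsupp.single (decr m j) (1 : ℤ))

/-- The Björner–Vrećica boundary operator, with real coefficients. -/
noncomputable def bdryR (n : ℕ) : (Mon n →₀ ℝ) →ₗ[ℝ] (Mon n →₀ ℝ) :=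
  Finsupp.lsum ℝ fun m => LinearMap.toSpanSingleton ℝ _
    (∑ j, (((-1 : ℝ) ^ presum m j) * ((m j % 2 : ℕ) : ℝ)) • Finsupp.single (decr m j) (1 : ℝ))

/-- The dual boundary operator `∂*` of the multicomplex `M`. -/
noncomputable def upL {n : ℕ} (M : Finset (Mon n)) : (Mon n →₀ ℝ) →ₗ[ℝ] (Mon n →₀ ℝ) :=
  Finsupp.lsum ℝ fun m => LinearMap.toSpanSingleton ℝ _
    (∑ j, (if m j % 2 = 0 ∧ incr m j ∈ M then ((-1 : ℝ) ^ presum m j) else 0) •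
      Finsupp.single (incr m j) (1 : ℝ))

/-- Inner product making the monomials an orthonormal basis. -/
noncomputable def dot {n : ℕ} (f g : Mon n →₀ ℝ) : ℝ := ∑ m ∈ f.support, f m * g m

/-- Degree-`d` part of `M`. -/
def Mdeg {n : ℕ} (M : Finset (Mon n)) (d : ℕ) : Finset (Mon n) :=
  M.filter fun m => tdeg m = d

/-- `ℝM_d`, the span of the degree-`d` monomials of `M`. -/
noncomputable def Vdeg {n : ℕ} (M : Finset (Mon n)) (d : ℕ) : Submodule ℝ (Mon n →₀ ℝ) :=
  Submodule.span ℝ ((fun m => Finsupp.single m (1 : ℝ)) '' ↑(Mdeg M d))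

/-- The simplicial complex `M^{(p²)} = {q squarefree : p²q ∈ M}`. -/
def Mp2 {n : ℕ} (M : Finset (Mon n)) (p : Mon n) : Finset (Mon n) :=
  M.filter fun q => (∀ i, q i ≤ 1) ∧ mulSq p q ∈ M

/-- The set of monomials `p` with `p² ∈ M`. -/
def sqrts {n : ℕ} (M : Finset (Mon n)) : Finset (Mon n) :=
  (M.filter fun m => ∀ i, m i % 2 = 0).image fun m i => m i / 2

/-- Laplacian `L' = ∂∂*` of the multicomplex `M`. -/
noncomputable def lapUp {n : ℕ} (M : Finset (Mon n)) : (Mon n →₀ ℝ) →ₗ[ℝ] (Mon n →₀ ℝ) :=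
  bdryR n ∘ₗ upL M

/-- Laplacian `L'' = ∂*∂` of the multicomplex `M`. -/
noncomputable def lapDown {n : ℕ} (M : Finset (Mon n)) : (Mon n →₀ ℝ) →ₗ[ℝ] (Mon n →₀ ℝ) :=
  upL M ∘ₗ bdryR n

/-- Multiplicity of `μ` as an eigenvalue of an operator `T` on `ℝM_d`. -/
noncomputable def multOf {n : ℕ} (M : Finset (Mon n)) (d : ℕ)
    (T : (Mon n →₀ ℝ) →ₗ[ℝ] (Mon n →₀ ℝ)) (μ : ℝ) : ℕ :=
  Module.finrank ℝ ↥(LinearMap.ker (T - μ • LinearMap.id) ⊓ Vdeg M d)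

/-- Multiplicity of `μ` in the spectrum `s'_d` of `L'_d`. -/
noncomputable def multL' {n : ℕ} (M : Finset (Mon n)) (d : ℕ) (μ : ℝ) : ℕ :=
  multOf M d (lapUp M) μ

/-- Multiplicity of `μ` in the spectrum `s''_d` of `L''_d`. -/
noncomputable def multL'' {n : ℕ} (M : Finset (Mon n)) (d : ℕ) (μ : ℝ) : ℕ :=
  multOf M d (lapDown M) μ

/-- Multiplicity of `μ` in the spectrum `s^{tot}_d` of `L_d = L'_d + L''_d`. -/
noncomputable def multL {n : ℕ} (M : Finset (Mon n)) (d : ℕ) (μ : ℝ) : ℕ :=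
  multOf M d (lapUp M + lapDown M) μ

/-- Shifted multicomplex (relative to its support). -/
def Shifted {n : ℕ} (N : Finset (Mon n)) : Prop :=
  ∀ (m : Mon n) (i j : Fin n), i < j → incr m j ∈ N → unitMon i ∈ N → incr m i ∈ N

/-- Shifted simplicial complex (relative to its support). -/
def ShiftedSimp {n : ℕ} (N : Finset (Mon n)) : Prop :=
  ∀ (m : Mon n) (i j : Fin n), i < j → incr m j ∈ N → unitMon i ∈ N → m i = 0 →
    incr m i ∈ N

/-- `d_j`: the number of monomials of degree `k` in `N` divisible by `x_j`. -/
def dseq {n : ℕ} (N : Finset (Mon n)) (k : ℕ) (j : Fin n) : ℕ :=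
  ((Mdeg N k).filter fun m => 1 ≤ m j).card

/-- The `j`-th entry of the conjugate partition `d_k^T(N)`. -/
def dconj {n : ℕ} (N : Finset (Mon n)) (k : ℕ) (j : ℕ) : ℕ :=
  (Finset.univ.filter fun i : Fin n => j ≤ dseq N k i).card

section Aux

variable {n : ℕ}

lemma bdry_single_eval (m : Mon n) :
    bdryR n (Finsupp.single m 1) =
      ∑ j, (((-1 : ℝ) ^ presum m j) * ((m j % 2 : ℕ) : ℝ)) •
        Finsupp.single (decr m j) (1 : ℝ) := by
  simp [bdryR]

lemma upL_single_eval (M : Finset (Mon n)) (m : Mon n) :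
    upL M (Finsupp.single m 1) =
      ∑ j, (if m j % 2 = 0 ∧ incr m j ∈ M then ((-1 : ℝ) ^ presum m j) else 0) •
        Finsupp.single (incr m j) (1 : ℝ) := by
  simp [upL]

lemma presum_mulSq (p m : Mon n) (j : Fin n) :
    presum (mulSq p m) j = 2 * presum p j + presum m j := by
  simp [presum, mulSq, Finset.sum_add_distrib, Finset.mul_sum]

lemma sign_mulSq (p m : Mon n) (j : Fin n) :
    ((-1 : ℝ) ^ presum (mulSq p m) j) = (-1 : ℝ) ^ presum m j := by
  rw [presum_mulSq, pow_add, pow_mul]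
  norm_num

lemma incr_mulSq (p m : Mon n) (j : Fin n) :
    incr (mulSq p m) j = mulSq p (incr m j) := by
  funext i
  by_cases hij : i = j <;> simp [incr, mulSq, Function.update, hij]; ring

lemma decr_mulSq (p m : Mon n) (j : Fin n) (hm : 1 ≤ m j) :
    decr (mulSq p m) j = mulSq p (decr m j) := by
  funext i
  by_cases hij : i = j <;> simp [decr, mulSq, Function.update, hij]
  omega

end Aux

section Aux2
variable {n : ℕ}

/-- ∂ commutes with multiplication by p² on monomials. -/
lemma bdry_mulSq_single (p m : Mon n) :
    bdryR n (Finsupp.single (mulSq p m) 1) =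
      Finsupp.mapDomain (mulSq p) (bdryR n (Finsupp.single m 1)) := by
  rw [bdry_single_eval, bdry_single_eval, Finsupp.mapDomain_finset_sum]
  refine Finset.sum_congr rfl fun j _ => ?_
  rw [Finsupp.mapDomain_smul, Finsupp.mapDomain_single]
  have hmod : mulSq p m j % 2 = m j % 2 := by simp [mulSq]
  rcases Nat.eq_zero_or_pos (m j) with h0 | h1
  · have : m j % 2 = 0 := by omega
    simp [hmod, this]
  · rw [sign_mulSq, hmod, decr_mulSq p m j h1]

/-- ∂* commutes with multiplication by p² on square-free monomials. -/
lemma upL_mulSq_single (M : Finset (Mon n)) (hM : IsMulticomplex M)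
    (p m : Mon n) (hm : SqFree m) :
    upL M (Finsupp.single (mulSq p m) 1) =
      Finsupp.mapDomain (mulSq p) (upL (Mp2 M p) (Finsupp.single m 1)) := by
  rw [upL_single_eval, upL_single_eval, Finsupp.mapDomain_finset_sum]
  refine Finset.sum_congr rfl fun j _ => ?_
  rw [Finsupp.mapDomain_smul, Finsupp.mapDomain_single, incr_mulSq]
  have hmod : mulSq p m j % 2 = m j % 2 := by simp [mulSq]
  have hcond : (mulSq p m j % 2 = 0 ∧ incr (mulSq p m) j ∈ M) ↔
      (m j % 2 = 0 ∧ incr m j ∈ Mp2 M p) := by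
    rw [incr_mulSq, hmod]
    constructor
    · rintro ⟨h0, hmem⟩
      have hz : m j = 0 := by have := hm j; omega
      have hdvd : mdvd (incr m j) (mulSq p (incr m j)) := fun i => by
        simp [mulSq]
      refine ⟨h0, ?_⟩
      rw [Mp2, Finset.mem_filter]
      refine ⟨hM _ _ hdvd hmem, fun i => ?_, hmem⟩
      by_cases hij : i = j <;> simp [incr, Function.update, hij]
      · omega
      · exact hm i
    · rintro ⟨h0, hmem⟩
      rw [Mp2, Finset.mem_filter] at hmem
      exact ⟨h0, hmem.2.2⟩
  rw [incr_mulSq] at hcond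
  by_cases hc : m j % 2 = 0 ∧ incr m j ∈ Mp2 M p
  · rw [if_pos (hcond.mpr hc), if_pos hc, sign_mulSq]
  · rw [if_neg (fun hh => hc (hcond.mp hh)), if_neg hc]

/-- ∂ commutes with mapDomain (mulSq p) in general. -/
lemma bdry_mapDomain (p : Mon n) (f : Mon n →₀ ℝ) :
    bdryR n (Finsupp.mapDomain (mulSq p) f) =
      Finsupp.mapDomain (mulSq p) (bdryR n f) := by
  induction f using Finsupp.induction_linear with
  | zero => simp
  | add f g hf hg => simp [Finsupp.mapDomain_add, map_add, hf, hg]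
  | single a b =>
      have : (Finsupp.single a b : Mon n →₀ ℝ) = b • Finsupp.single a 1 := by
        simp [Finsupp.smul_single]
      rw [this, Finsupp.mapDomain_smul, map_smul, map_smul, Finsupp.mapDomain_smul,
        Finsupp.mapDomain_single, bdry_mulSq_single]

end Aux2

section Main
variable {n : ℕ}

lemma sqFree_decr {m : Mon n} (hm : SqFree m) (j : Fin n) : SqFree (decr m j) := by
  intro i
  by_cases hij : i = j
  · subst hij
    simp only [decr, Function.update_self]
    have := hm i; omega
  · simp only [decr, Function.update_of_ne hij]
    exact hm i

end Main

/-- the Laplacians commute with multiplication by `p²`: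
`L'(p²q) = p²L'(q)`, `L''(p²q) = p²L''(q)`, `L(p²q) = p²L(q)`, where on the
right-hand side the Laplacian of the simplicial complex `M^{(p²)}` is used. -/
theorem laplacian_mulSq {n : ℕ} (M : Finset (Mon n)) (hM : IsMulticomplex M)
    (p q : Mon n) (hq : SqFree q) (h : mulSq p q ∈ M) :
    lapUp M (Finsupp.single (mulSq p q) 1) =
      Finsupp.mapDomain (mulSq p) (lapUp (Mp2 M p) (Finsupp.single q 1)) ∧
    lapDown M (Finsupp.single (mulSq p q) 1) =
      Finsupp.mapDomain (mulSq p) (lapDown (Mp2 M p) (Finsupp.single q 1)) ∧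
    (lapUp M + lapDown M) (Finsupp.single (mulSq p q) 1) =
      Finsupp.mapDomain (mulSq p)
        ((lapUp (Mp2 M p) + lapDown (Mp2 M p)) (Finsupp.single q 1)) := by
  have h1 : lapUp M (Finsupp.single (mulSq p q) 1) =
      Finsupp.mapDomain (mulSq p) (lapUp (Mp2 M p) (Finsupp.single q 1)) := by
    rw [lapUp, lapUp, LinearMap.comp_apply, LinearMap.comp_apply,
      upL_mulSq_single M hM p q hq, bdry_mapDomain]
  have h2 : lapDown M (Finsupp.single (mulSq p q) 1) =
      Finsupp.mapDomain (mulSq p) (lapDown (Mp2 M p) (Finsupp.single q 1)) := by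
    rw [lapDown, lapDown, LinearMap.comp_apply, LinearMap.comp_apply,
      bdry_mulSq_single, bdry_single_eval, Finsupp.mapDomain_finset_sum,
      map_sum, map_sum, Finsupp.mapDomain_finset_sum]
    refine Finset.sum_congr rfl fun j _ => ?_
    rw [Finsupp.mapDomain_smul, Finsupp.mapDomain_single, map_smul, map_smul,
      Finsupp.mapDomain_smul, upL_mulSq_single M hM p (decr q j) (sqFree_decr hq j)]
  exact ⟨h1, h2, by simp only [LinearMap.add_apply, Finsupp.mapDomain_add, h1, h2]⟩
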